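/- Let a, b be real numbers and let μ_ℓ = volume.withDensity((x,y,z) ↦ exp((b−a)·z)) be the left Haar measure of Sol(a,b) on ℝ³. Then for every g = (α,β,γ) ∈ ℝ³, the pushforward of μ_ℓ under the right translation R_g(x,y,z) = (x + e^{az}·α, y + e^{−bz}·β, z + γ) equals e^{(a−b)γ} · μ_ℓ. Consequently the modular function of Sol(a,b) is λ(α,β,γ) = e^{(a−b)γ} (with the convention ∫ f(g·g₀) dμ_ℓ(g) = λ(g₀) ∫ f dμ_ℓ). -/

import Mathlib

open MeasureTheory


lemma sigma_preserving : MeasurePreserving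
    (fun p : ℝ × ℝ × ℝ => ((p.2.2, (p.1, p.2.1)) : ℝ × ℝ × ℝ)) volume volume := by
  have h1 : MeasurePreserving (MeasurableEquiv.prodAssoc.symm : ℝ × ℝ × ℝ ≃ᵐ (ℝ × ℝ) × ℝ)
      volume volume := (volume_preserving_prodAssoc).symm
  have h2 : MeasurePreserving (Prod.swap : (ℝ × ℝ) × ℝ → ℝ × (ℝ × ℝ)) volume volume := by
    rw [Measure.volume_eq_prod, Measure.volume_eq_prod]
    exact Measure.measurePreserving_swap
  exact h2.comp h1

lemma vol_preserving (a b α β γ : ℝ) :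
    MeasurePreserving
      (fun p : ℝ × ℝ × ℝ =>
        ((p.1 + Real.exp (a * p.2.2) * α,
          p.2.1 + Real.exp (-b * p.2.2) * β,
          p.2.2 + γ) : ℝ × ℝ × ℝ)) volume volume := by
  have hσ := sigma_preserving
  have hσinv : MeasurePreserving
      (fun p : ℝ × ℝ × ℝ => ((p.2.1, (p.2.2, p.1)) : ℝ × ℝ × ℝ)) volume volume := by
    exact hσ.comp hσ
  -- skew product
  have hT' : MeasurePreserving
      (fun p : ℝ × ℝ × ℝ =>
        ((p.1 + γ, (p.2.1 + Real.exp (a * p.1) * α, p.2.2 + Real.exp (-b * p.1) * β)) : ℝ × ℝ × ℝ))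
      volume volume := by
    rw [Measure.volume_eq_prod]
    have hf : MeasurePreserving (fun z : ℝ => z + γ) volume volume :=
      measurePreserving_add_right volume γ
    have hgm : Measurable (Function.uncurry fun (z : ℝ) (q : ℝ × ℝ) =>
        ((q.1 + Real.exp (a * z) * α, q.2 + Real.exp (-b * z) * β) : ℝ × ℝ)) := by
      fun_prop
    refine hf.skew_product hgm (ae_of_all _ fun z => ?_)
    have : (fun q : ℝ × ℝ => ((q.1 + Real.exp (a * z) * α, q.2 + Real.exp (-b * z) * β) : ℝ × ℝ))
        = fun q : ℝ × ℝ => q + (Real.exp (a * z) * α, Real.exp (-b * z) * β) := rfl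
    rw [this]
    exact (measurePreserving_add_right volume _).map_eq
  have := hσinv.comp (hT'.comp hσ)
  convert this using 1
  rfl

lemma map_withDensity_aux {T S : ℝ × ℝ × ℝ → ℝ × ℝ × ℝ} (hT : Measurable T) (hS : Measurable S)
    (hST : ∀ p, S (T p) = p) (hmap : Measure.map T volume = volume)
    {d : ℝ × ℝ × ℝ → ENNReal} (hd : Measurable d) :
    Measure.map T (volume.withDensity d) = volume.withDensity (d ∘ S) := by
  ext s hs
  rw [Measure.map_apply hT hs, withDensity_apply _ (hT hs), withDensity_apply _ hs]
  calc ∫⁻ p in T ⁻¹' s, d p = ∫⁻ p in T ⁻¹' s, (d ∘ S) (T p) := by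
        apply setLIntegral_congr_fun (hT hs)
        exact fun p _ => by simp [hST]
    _ = ∫⁻ q in s, (d ∘ S) q ∂(Measure.map T volume) :=
        (setLIntegral_map hs (hd.comp hS) hT).symm
    _ = ∫⁻ q in s, (d ∘ S) q := by rw [hmap]

/-- The pushforward of the left Haar measure `μ_ℓ = e^{(b−a)z} dx dy dz` of
`Sol(a,b)` under the right translation `R_g`, `g = (α,β,γ)`, equals
`e^{(a−b)γ} · μ_ℓ`; hence the modular function of `Sol(a,b)` is
`λ(α,β,γ) = e^{(a−b)γ}`. -/
theorem modular_function_sol (a b : ℝ) :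
    ∀ g : ℝ × ℝ × ℝ,
      Measure.map
        (fun p : ℝ × ℝ × ℝ =>
          ((p.1 + Real.exp (a * p.2.2) * g.1,
            p.2.1 + Real.exp (-b * p.2.2) * g.2.1,
            p.2.2 + g.2.2) : ℝ × ℝ × ℝ))
        (volume.withDensity fun p : ℝ × ℝ × ℝ =>
          ENNReal.ofReal (Real.exp ((b - a) * p.2.2))) =
      ENNReal.ofReal (Real.exp ((a - b) * g.2.2)) •
        (volume.withDensity fun p : ℝ × ℝ × ℝ =>
          ENNReal.ofReal (Real.exp ((b - a) * p.2.2))) := by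
  rintro ⟨α, β, γ⟩
  set T : ℝ × ℝ × ℝ → ℝ × ℝ × ℝ := fun p =>
    (p.1 + Real.exp (a * p.2.2) * α, p.2.1 + Real.exp (-b * p.2.2) * β, p.2.2 + γ) with hTdef
  set S : ℝ × ℝ × ℝ → ℝ × ℝ × ℝ := fun p =>
    (p.1 - Real.exp (a * (p.2.2 - γ)) * α, p.2.1 - Real.exp (-b * (p.2.2 - γ)) * β, p.2.2 - γ)
    with hSdef
  have hT : Measurable T := by fun_prop
  have hS : Measurable S := by fun_prop
  have hST : ∀ p, S (T p) = p := by
    rintro ⟨x, y, z⟩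
    simp [hSdef, hTdef]
  have hd : Measurable (fun p : ℝ × ℝ × ℝ => ENNReal.ofReal (Real.exp ((b - a) * p.2.2))) := by
    fun_prop
  rw [map_withDensity_aux hT hS hST (vol_preserving a b α β γ).map_eq hd]
  rw [← withDensity_smul _ hd]
  congr 1
  funext p
  simp only [hSdef, Function.comp_apply, Pi.smul_apply, smul_eq_mul]
  rw [← ENNReal.ofReal_mul (Real.exp_nonneg _), ← Real.exp_add]
  ring_nf
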